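/- arXiv:1502.02539 — 2 statements merged into one kernel-verified Lean document; each statement's English description precedes it below -/
import Mathlib

section
/- For each j ≥ 1 let p_j = e^{−2^{−j}} / (1 + e^{−2^{−j}}) (equivalently p_j/(1 − p_j) = e^{−2^{−j}}), and let (X_j)_{j≥1} be independent random variables with P(X_j = 2^{−j}) = p_j and P(X_j = 0) = 1 − p_j. Then the random variable X = Σ_{j=1}^∞ X_j is absolutely continuous with probability density f_X(x) = e^{−x}/(1 − e^{−1}) for x ∈ [0,1] (and 0 elsewhere); i.e., X is a truncated exponential random variable on [0,1]. -/
open MeasureTheory Set Filter Real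
open scoped ENNReal Topology

namespace BCTE

noncomputable def c (j : ℕ) : ℝ := ((2:ℝ) ^ (j+1))⁻¹
noncomputable def a (j : ℕ) : ℝ := Real.exp (-c j)
noncomputable def p (j : ℕ) : ℝ := a j / (1 + a j)
noncomputable def q (j : ℕ) : ℝ := 1 - a j / (1 + a j)

lemma c_pos (j : ℕ) : 0 < c j := by rw [c]; positivity
lemma c_le_half (j : ℕ) : c j ≤ 2⁻¹ := by
  rw [c, inv_le_inv₀ (by positivity) (by norm_num)]
  calc (2:ℝ) = 2^1 := by norm_num
  _ ≤ 2^(j+1) := by apply pow_le_pow_right₀ (by norm_num) (by omega)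
lemma a_pos (j : ℕ) : 0 < a j := Real.exp_pos _
lemma a_lt_one (j : ℕ) : a j < 1 := by
  rw [a, Real.exp_lt_one_iff]; simpa using c_pos j
lemma one_add_a_pos (j : ℕ) : 0 < 1 + a j := by linarith [a_pos j]
lemma p_nonneg (j : ℕ) : 0 ≤ p j :=
  div_nonneg (a_pos j).le (one_add_a_pos j).le
lemma q_eq (j : ℕ) : q j = (1 + a j)⁻¹ := by
  have := one_add_a_pos j
  field_simp [q]
  rw [q]; field_simp; ring
lemma q_nonneg (j : ℕ) : 0 ≤ q j := by
  rw [q_eq]; exact inv_nonneg.2 (one_add_a_pos j).le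
lemma p_add_q (j : ℕ) : p j + q j = 1 := by simp [p, q]
lemma q_le (j : ℕ) : q j ≤ (1 + Real.exp (-2⁻¹))⁻¹ := by
  rw [q_eq]
  have h : Real.exp (-2⁻¹) ≤ a j := by
    rw [a, Real.exp_le_exp]; simpa using c_le_half j
  have h2 : (0:ℝ) < 1 + Real.exp (-2⁻¹) := by positivity
  exact inv_anti₀ h2 (by linarith)

lemma r_lt_one : (1 + Real.exp (-2⁻¹))⁻¹ < 1 := by
  rw [inv_lt_one_iff₀]; right; linarith [Real.exp_pos (-2⁻¹:ℝ)]

lemma one_sub_E_pos : 0 < 1 - Real.exp (-1:ℝ) := by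
  have : Real.exp (-1:ℝ) < 1 := by rw [Real.exp_lt_one_iff]; norm_num
  linarith

lemma a_sq (n : ℕ) : a n * a n = Real.exp (-((2:ℝ)^n)⁻¹) := by
  rw [a, ← Real.exp_add, c]
  congr 1
  rw [pow_succ]
  field_simp
  ring

/-- key step identity -/
lemma key_step (n k : ℕ) :
    (1 - Real.exp (-(((k+1)/2 : ℕ) / (2:ℝ)^n))) * q n
      + (1 - Real.exp (-((k/2 : ℕ) / (2:ℝ)^n))) * p n
      = 1 - Real.exp (-((k:ℝ) / (2:ℝ)^(n+1))) := by
  have ha := a_pos n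
  have h1a := one_add_a_pos n
  rcases Nat.even_or_odd k with ⟨m, hm⟩ | ⟨m, hm⟩
  · subst hm
    have h1 : (m + m + 1) / 2 = m := by omega
    have h2 : (m + m) / 2 = m := by omega
    have h3 : ((m+m : ℕ):ℝ) / (2:ℝ)^(n+1) = (m:ℝ) / 2^n := by
      push_cast; rw [pow_succ]; field_simp; ring
    rw [h1, h2, h3, ← mul_add, add_comm (q n), p_add_q, mul_one]
  · subst hm
    have h1 : (2*m + 1 + 1) / 2 = m + 1 := by omega
    have h2 : (2*m + 1) / 2 = m := by omega
    rw [h1, h2]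
    have E3 : Real.exp (-(((m+1:ℕ):ℝ)/2^n)) = Real.exp (-((m:ℝ)/2^n)) * (a n * a n) := by
      rw [a_sq, ← Real.exp_add]
      congr 1
      push_cast
      field_simp
      ring
    have E4 : Real.exp (-(((2*m+1:ℕ):ℝ)/2^(n+1))) = Real.exp (-((m:ℝ)/2^n)) * a n := by
      rw [a, ← Real.exp_add, c]
      congr 1
      push_cast
      rw [pow_succ]
      field_simp
      ring
    rw [E3, E4, q_eq, p]
    field_simp
    ring

lemma cast_div_lt (m k n : ℕ) : (m:ℝ)/2^n < (k:ℝ)/2^n ↔ m < k := by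
  rw [div_lt_div_iff_of_pos_right (by positivity : (0:ℝ) < 2^n)]
  exact_mod_cast Iff.rfl

lemma two_m (m n : ℕ) : ((2*m : ℕ):ℝ)/2^(n+1) = (m:ℝ)/2^n := by
  push_cast; rw [pow_succ]; field_simp

lemma two_m1 (m n : ℕ) : ((2*m+1 : ℕ):ℝ)/2^(n+1) = (m:ℝ)/2^n + c n := by
  rw [c]; push_cast; rw [pow_succ]; field_simp

lemma one_sub_exp_nonneg {t : ℝ} (ht : 0 ≤ t) : 0 ≤ 1 - Real.exp (-t) := by
  have : Real.exp (-t) ≤ 1 := Real.exp_le_one_iff.mpr (by linarith)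
  linarith

lemma summable_c : Summable c := by
  have h : Summable (fun j : ℕ => (2⁻¹:ℝ) * (2⁻¹:ℝ)^j) :=
    (summable_geometric_of_lt_one (by norm_num) (by norm_num)).mul_left _
  apply h.congr
  intro j
  rw [c, ← inv_pow, pow_succ]
  ring

lemma tsum_c_from (n : ℕ) : ∑' j : ℕ, c (j+n) = ((2:ℝ)^n)⁻¹ := by
  have h : ∀ j : ℕ, c (j+n) = ((2:ℝ)^n)⁻¹ * (2⁻¹ * (2⁻¹:ℝ)^j) := by
    intro j
    rw [c, pow_add, pow_succ, ← inv_pow]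
    ring
    norm_num
  rw [tsum_congr h, tsum_mul_left, tsum_mul_left, tsum_geometric_of_lt_one (by norm_num) (by norm_num)]
  norm_num

noncomputable def dens : ℝ → ℝ≥0∞ := fun x => ENNReal.ofReal (Real.exp (-x) / (1 - Real.exp (-1)))

lemma meas_dens : Measurable dens := by
  apply ENNReal.measurable_ofReal.comp
  exact ((Real.continuous_exp.comp continuous_neg).div_const _).measurable

noncomputable def rho : Measure ℝ := (volume.restrict (Icc (0:ℝ) 1)).withDensity dens

lemma rho_apply {s : Set ℝ} (hs : MeasurableSet s) :
    rho s = ∫⁻ x in s ∩ Icc (0:ℝ) 1, dens x := by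
  rw [rho, withDensity_apply _ hs, Measure.restrict_restrict hs]

lemma rho_Iic {t : ℝ} (h0 : 0 ≤ t) (h1 : t ≤ 1) :
    rho (Iic t) = ENNReal.ofReal ((1 - Real.exp (-t)) / (1 - Real.exp (-1))) := by
  rw [rho_apply measurableSet_Iic]
  have hset : Iic t ∩ Icc (0:ℝ) 1 = Icc 0 t := by
    ext x
    simp only [mem_inter_iff, mem_Iic, mem_Icc]
    constructor
    · rintro ⟨h, h2, h3⟩; exact ⟨h2, h⟩
    · rintro ⟨h2, h⟩; exact ⟨h, h2, by linarith⟩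
  rw [hset]
  have hcont : Continuous (fun x : ℝ => Real.exp (-x) / (1 - Real.exp (-1))) :=
    (Real.continuous_exp.comp continuous_neg).div_const _
  have hint : IntegrableOn (fun x : ℝ => Real.exp (-x) / (1 - Real.exp (-1))) (Icc 0 t) volume :=
    hcont.integrableOn_Icc
  have hnn : 0 ≤ᵐ[volume.restrict (Icc (0:ℝ) t)]
      (fun x : ℝ => Real.exp (-x) / (1 - Real.exp (-1))) := by
    filter_upwards with x
    exact div_nonneg (Real.exp_pos _).le one_sub_E_pos.le
  simp only [dens]
  rw [← ofReal_integral_eq_lintegral_ofReal hint hnn]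
  congr 1
  rw [integral_div]
  congr 1
  rw [MeasureTheory.integral_Icc_eq_integral_Ioc, ← intervalIntegral.integral_of_le h0,
    intervalIntegral.integral_comp_neg (f := Real.exp), integral_exp]
  simp

set_option linter.unusedSectionVars false

section Main

variable {Ω : Type} [MeasurableSpace Ω] (μ : Measure Ω) [IsProbabilityMeasure μ]
  (X : ℕ → Ω → ℝ)

noncomputable def S (n : ℕ) (ω : Ω) : ℝ := ∑ j ∈ Finset.range n, X j ω
def D (n : ℕ) : Set Ω := {ω | ∀ j < n, X j ω = 0 ∨ X j ω = c j}
def G : Set Ω := {ω | ∀ j, X j ω = 0 ∨ X j ω = c j}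

variable {X}

lemma meas_S (hmeas : ∀ j, Measurable (X j)) (n : ℕ) : Measurable (S X n) :=
  Finset.measurable_sum _ (fun j _ => hmeas j)

lemma meas_D (hmeas : ∀ j, Measurable (X j)) (n : ℕ) : MeasurableSet (D X n) := by
  have : D X n = ⋂ j, ⋂ (_ : j < n), (X j) ⁻¹' {0, c j} := by
    ext ω; simp [D]
  rw [this]
  exact MeasurableSet.iInter fun j => MeasurableSet.iInter fun _ =>
    (hmeas j) ((measurableSet_singleton (c j)).insert 0)

lemma D_succ (n : ℕ) : D X (n+1) = D X n ∩ {ω | X n ω = 0 ∨ X n ω = c n} := by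
  ext ω
  constructor
  · intro h; exact ⟨fun j hj => h j (by omega), h n (by omega)⟩
  · rintro ⟨h1, h2⟩ j hj
    rcases Nat.lt_or_ge j n with h | h
    · exact h1 j h
    · have : j = n := by omega
      subst this; exact h2

lemma dyadic_value (n : ℕ) : ∀ ω ∈ D X n, ∃ m : ℕ, S X n ω = (m:ℝ) / 2^n := by
  induction n with
  | zero => intro ω _; exact ⟨0, by simp [S]⟩
  | succ n ih =>
    intro ω hω
    rw [D_succ] at hω
    obtain ⟨m, hSm⟩ := ih ω hω.1
    have hS : S X (n+1) ω = S X n ω + X n ω := Finset.sum_range_succ _ _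
    rcases hω.2 with h | h
    · refine ⟨2*m, ?_⟩
      rw [hS, h, hSm]
      push_cast
      rw [pow_succ]
      field_simp
      ring
    · refine ⟨2*m+1, ?_⟩
      rw [hS, h, hSm, c]
      push_cast
      rw [pow_succ]
      field_simp

lemma indep_cut (hmeas : ∀ j, Measurable (X j))
    (hindep : ProbabilityTheory.iIndepFun X μ)
    (n : ℕ) (t v : ℝ) :
    μ (D X n ∩ {ω | S X n ω < t} ∩ {ω | X n ω = v})
      = μ (D X n ∩ {ω | S X n ω < t}) * μ {ω | X n ω = v} := by
  classical
  have h := hindep.indepFun_finset (Finset.range n) {n}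
    (by simp) hmeas
  set f : Ω → ((i : (Finset.range n : Finset ℕ)) → ℝ) := fun a i => X i a with hf
  set g : Ω → ((i : ({n} : Finset ℕ)) → ℝ) := fun a i => X i a with hg
  set B1 : Set ((i : (Finset.range n : Finset ℕ)) → ℝ) :=
    {x | (∀ i, x i = 0 ∨ x i = c i) ∧ (∑ i, x i) < t} with hB1
  set B2 : Set ((i : ({n} : Finset ℕ)) → ℝ) :=
    {x | x ⟨n, Finset.mem_singleton_self n⟩ = v} with hB2
  have measB1 : MeasurableSet B1 := by
    have hsplit : B1 = {x : (i : (Finset.range n : Finset ℕ)) → ℝ | ∀ i, x i = 0 ∨ x i = c i.1}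
        ∩ {x | (∑ i, x i) < t} := rfl
    rw [hsplit]
    apply MeasurableSet.inter
    · have : {x : (i : (Finset.range n : Finset ℕ)) → ℝ | ∀ i, x i = 0 ∨ x i = c i}
          = ⋂ i : (Finset.range n : Finset ℕ),
              (fun x : (i : (Finset.range n : Finset ℕ)) → ℝ => x i) ⁻¹' {0, c i.1} := by
        ext x; simp
      rw [this]
      exact MeasurableSet.iInter fun i =>
        (measurable_pi_apply i) ((measurableSet_singleton _).insert 0)
    · exact measurableSet_lt (Finset.measurable_sum _ fun i _ => measurable_pi_apply i)
        measurable_const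
  have measB2 : MeasurableSet B2 := by
    have : B2 = (fun x : (i : ({n} : Finset ℕ)) → ℝ =>
        x ⟨n, Finset.mem_singleton_self n⟩) ⁻¹' {v} := rfl
    rw [this]
    exact (measurable_pi_apply _) (measurableSet_singleton v)
  have hfB1 : f ⁻¹' B1 = D X n ∩ {ω | S X n ω < t} := by
    ext ω
    simp only [hB1, hf, mem_preimage, mem_setOf_eq, D, S, mem_inter_iff]
    rw [Finset.sum_coe_sort (Finset.range n) (fun j => X j ω)]
    constructor
    · rintro ⟨h1, h2⟩
      exact ⟨fun j hj => h1 ⟨j, Finset.mem_range.2 hj⟩, h2⟩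
    · rintro ⟨h1, h2⟩
      exact ⟨fun i => h1 i.1 (Finset.mem_range.1 i.2), h2⟩
  have hgB2 : g ⁻¹' B2 = {ω | X n ω = v} := by
    ext ω; simp [hB2, hg]
  rw [← hfB1, ← hgB2]
  exact h.measure_inter_preimage_eq_mul B1 B2 measB1 measB2

lemma dyadic_cdf (hmeas : ∀ j, Measurable (X j))
    (hindep : ProbabilityTheory.iIndepFun X μ)
    (hone' : ∀ j, μ {ω | X j ω = c j} = ENNReal.ofReal (p j))
    (hzero' : ∀ j, μ {ω | X j ω = 0} = ENNReal.ofReal (q j)) :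
    ∀ n k : ℕ, k ≤ 2^n →
      μ (D X n ∩ {ω | S X n ω < (k:ℝ)/2^n})
        = ENNReal.ofReal ((1 - Real.exp (-((k:ℝ)/2^n))) / (1 - Real.exp (-1))) := by
  intro n
  induction n with
  | zero =>
    intro k hk
    have hD0 : D X 0 = (univ : Set Ω) := by ext ω; simp [D]
    have hS0 : ∀ ω : Ω, S X 0 ω = 0 := fun ω => by simp [S]
    have hE : Real.exp (-1:ℝ) < 1 := by rw [Real.exp_lt_one_iff]; norm_num
    interval_cases k
    · have h : {ω : Ω | S X 0 ω < ((0:ℕ):ℝ)/2^0} = ∅ := by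
        ext ω; simp [hS0]
      rw [h]
      simp
    · have h : {ω : Ω | S X 0 ω < ((1:ℕ):ℝ)/2^0} = univ := by
        ext ω; simp [hS0]
      rw [h, hD0, inter_univ, measure_univ]
      norm_num
      rw [div_self (by linarith)]
      simp
  | succ n ih =>
    intro k hk
    have hk1 : (k+1)/2 ≤ 2^n := by
      have h2 : 2^(n+1) = 2*2^n := by ring
      omega
    have hk2 : k/2 ≤ 2^n := by
      have h2 : 2^(n+1) = 2*2^n := by ring
      omega
    have hcne : c n ≠ 0 := ne_of_gt (c_pos n)
    set A := D X n ∩ {ω | S X n ω < (((k+1)/2 : ℕ):ℝ)/2^n} ∩ {ω | X n ω = 0} with hA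
    set B := D X n ∩ {ω | S X n ω < ((k/2 : ℕ):ℝ)/2^n} ∩ {ω | X n ω = c n} with hB
    have hsplit : D X (n+1) ∩ {ω | S X (n+1) ω < (k:ℝ)/2^(n+1)} = A ∪ B := by
      ext ω
      constructor
      · rintro ⟨hD, hS⟩
        rw [D_succ] at hD
        obtain ⟨hDn, hXn⟩ := hD
        obtain ⟨m, hm⟩ := dyadic_value n ω hDn
        have hSs : S X (n+1) ω = S X n ω + X n ω := Finset.sum_range_succ _ _
        simp only [mem_setOf_eq] at hS
        rcases hXn with h0 | h1
        · left
          refine ⟨⟨hDn, ?_⟩, h0⟩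
          have hlt : ((2*m:ℕ):ℝ)/2^(n+1) < (k:ℝ)/2^(n+1) := by
            rw [two_m]
            rw [hSs, h0, add_zero, hm] at hS
            exact hS
          have h2m : 2*m < k := (cast_div_lt _ _ _).1 hlt
          have hmk : m < (k+1)/2 := by omega
          show S X n ω < _
          rw [hm]
          exact (cast_div_lt m ((k+1)/2) n).2 hmk
        · right
          refine ⟨⟨hDn, ?_⟩, h1⟩
          have hlt : ((2*m+1:ℕ):ℝ)/2^(n+1) < (k:ℝ)/2^(n+1) := by
            rw [two_m1]
            rw [hSs, h1, hm] at hS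
            exact hS
          have h2m : 2*m+1 < k := (cast_div_lt _ _ _).1 hlt
          have hmk : m < k/2 := by omega
          show S X n ω < _
          rw [hm]
          exact (cast_div_lt m (k/2) n).2 hmk
      · intro hω
        have hSs : S X (n+1) ω = S X n ω + X n ω := Finset.sum_range_succ _ _
        rcases hω with ⟨⟨hDn, hS⟩, hX⟩ | ⟨⟨hDn, hS⟩, hX⟩
        · obtain ⟨m, hm⟩ := dyadic_value n ω hDn
          simp only [mem_setOf_eq] at hS hX
          have hmk : m < (k+1)/2 := (cast_div_lt m ((k+1)/2) n).1 (hm ▸ hS)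
          have h2m : 2*m < k := by omega
          constructor
          · rw [D_succ]; exact ⟨hDn, Or.inl hX⟩
          · show S X (n+1) ω < _
            rw [hSs, hX, add_zero, hm, ← two_m m n]
            exact (cast_div_lt (2*m) k (n+1)).2 h2m
        · obtain ⟨m, hm⟩ := dyadic_value n ω hDn
          simp only [mem_setOf_eq] at hS hX
          have hmk : m < k/2 := (cast_div_lt m (k/2) n).1 (hm ▸ hS)
          have h2m : 2*m+1 < k := by omega
          constructor
          · rw [D_succ]; exact ⟨hDn, Or.inr hX⟩
          · show S X (n+1) ω < _
            rw [hSs, hX, hm, ← two_m1 m n]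
            exact (cast_div_lt (2*m+1) k (n+1)).2 h2m
    have hdisj : Disjoint A B := by
      rw [Set.disjoint_left]
      rintro ω ⟨_, h0⟩ ⟨_, h1⟩
      simp only [mem_setOf_eq] at h0 h1
      rw [h0] at h1
      exact hcne h1.symm
    have measB : MeasurableSet B :=
      (((meas_D hmeas n).inter (measurableSet_lt (meas_S hmeas n) measurable_const)).inter
        ((hmeas n) (measurableSet_singleton (c n))))
    rw [hsplit, measure_union hdisj measB, hA, hB,
      indep_cut μ hmeas hindep n _ 0, indep_cut μ hmeas hindep n _ (c n),
      ih _ hk1, ih _ hk2, hzero' n, hone' n]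
    have hu1 : (0:ℝ) ≤ (1 - Real.exp (-((((k+1)/2 : ℕ):ℝ)/2^n))) / (1 - Real.exp (-1)) :=
      div_nonneg (one_sub_exp_nonneg (by positivity)) one_sub_E_pos.le
    have hu2 : (0:ℝ) ≤ (1 - Real.exp (-(((k/2 : ℕ):ℝ)/2^n))) / (1 - Real.exp (-1)) :=
      div_nonneg (one_sub_exp_nonneg (by positivity)) one_sub_E_pos.le
    rw [← ENNReal.ofReal_mul hu1, ← ENNReal.ofReal_mul hu2,
      ← ENNReal.ofReal_add (mul_nonneg hu1 (q_nonneg n)) (mul_nonneg hu2 (p_nonneg n))]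
    congr 1
    rw [div_mul_eq_mul_div, div_mul_eq_mul_div, ← add_div, key_step]

lemma G_compl_null (hmeas : ∀ j, Measurable (X j))
    (hone' : ∀ j, μ {ω | X j ω = c j} = ENNReal.ofReal (p j))
    (hzero' : ∀ j, μ {ω | X j ω = 0} = ENNReal.ofReal (q j)) :
    μ (G X)ᶜ = 0 := by
  have hj : ∀ j, μ ({ω | X j ω = 0} ∪ {ω | X j ω = c j})ᶜ = 0 := by
    intro j
    have hd : Disjoint {ω : Ω | X j ω = 0} {ω | X j ω = c j} := by
      rw [Set.disjoint_left]
      intro ω h0 h1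
      simp only [mem_setOf_eq] at h0 h1
      rw [h0] at h1
      exact (ne_of_gt (c_pos j)) h1.symm
    have hm1 : MeasurableSet {ω : Ω | X j ω = 0} := hmeas j (measurableSet_singleton _)
    have hm2 : MeasurableSet {ω : Ω | X j ω = c j} := hmeas j (measurableSet_singleton _)
    have hu : μ ({ω : Ω | X j ω = 0} ∪ {ω | X j ω = c j}) = 1 := by
      rw [measure_union hd hm2, hzero' j, hone' j,
        ← ENNReal.ofReal_add (q_nonneg j) (p_nonneg j)]
      rw [add_comm (q j), p_add_q]
      simp
    rw [measure_compl (hm1.union hm2) (by simp [hu]), hu, measure_univ, tsub_self]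
  have hsub : (G X)ᶜ ⊆ ⋃ j, ({ω : Ω | X j ω = 0} ∪ {ω | X j ω = c j})ᶜ := by
    intro ω hω
    simp only [G, mem_compl_iff, mem_setOf_eq, not_forall] at hω
    obtain ⟨j, hjω⟩ := hω
    exact mem_iUnion.2 ⟨j, by simpa using hjω⟩
  exact measure_mono_null hsub (measure_iUnion_null hj)

lemma tail_null (hindep : ProbabilityTheory.iIndepFun X μ)
    (hzero' : ∀ j, μ {ω | X j ω = 0} = ENNReal.ofReal (q j)) (n : ℕ) :
    μ (⋂ j : ℕ, {ω | X (j+n) ω = 0}) = 0 := by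
  set r : ℝ≥0∞ := ENNReal.ofReal ((1 + Real.exp (-2⁻¹))⁻¹) with hr
  have hrlt : r < 1 := ENNReal.ofReal_lt_one.2 r_lt_one
  have hbound : ∀ M : ℕ, μ (⋂ j : ℕ, {ω | X (j+n) ω = 0}) ≤ r ^ M := by
    intro M
    set T : Finset ℕ := Finset.image (· + n) (Finset.range M) with hT
    have hsub : (⋂ j : ℕ, {ω : Ω | X (j+n) ω = 0}) ⊆ ⋂ i ∈ T, {ω | X i ω = 0} := by
      intro ω hω
      simp only [mem_iInter] at hω ⊢
      intro i hi
      simp only [hT, Finset.mem_image, Finset.mem_range] at hi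
      obtain ⟨j, _, rfl⟩ := hi
      exact hω j
    refine le_trans (measure_mono hsub) ?_
    have hprod : μ (⋂ i ∈ T, {ω | X i ω = 0}) = ∏ i ∈ T, μ {ω | X i ω = 0} := by
      refine hindep.meas_biInter (fun i _ => ?_)
      exact ⟨{0}, measurableSet_singleton 0, rfl⟩
    rw [hprod]
    have hle : ∀ i ∈ T, μ {ω | X i ω = 0} ≤ r := by
      intro i _
      rw [hzero' i]
      exact ENNReal.ofReal_le_ofReal (q_le i)
    calc ∏ i ∈ T, μ {ω | X i ω = 0} ≤ ∏ _i ∈ T, r := Finset.prod_le_prod' hle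
    _ = r ^ M := by
      rw [Finset.prod_const, hT, Finset.card_image_of_injective _ (add_left_injective n),
        Finset.card_range]
  have htend : Tendsto (fun M : ℕ => r ^ M) atTop (𝓝 0) :=
    ENNReal.tendsto_pow_atTop_nhds_zero_of_lt_one hrlt
  exact le_antisymm (ge_of_tendsto' htend hbound) bot_le

lemma cast_div_le (n : ℕ) {m k : ℕ} (h : m ≤ k) : (m:ℝ)/2^n ≤ (k:ℝ)/2^n := by
  gcongr

lemma G_nonneg {ω : Ω} (hω : ω ∈ G X) (j : ℕ) : 0 ≤ X j ω := by
  rcases hω j with h | h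
  · rw [h]
  · rw [h]; exact (c_pos j).le

lemma G_le {ω : Ω} (hω : ω ∈ G X) (j : ℕ) : X j ω ≤ c j := by
  rcases hω j with h | h
  · rw [h]; exact (c_pos j).le
  · rw [h]

lemma G_summable {ω : Ω} (hω : ω ∈ G X) : Summable (fun j => X j ω) :=
  Summable.of_nonneg_of_le (G_nonneg hω) (G_le hω) summable_c

lemma G_split {ω : Ω} (hω : ω ∈ G X) (n : ℕ) :
    (∑' j, X j ω) = S X n ω + ∑' j, X (j+n) ω :=
  (Summable.sum_add_tsum_nat_add n (G_summable hω)).symm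

lemma G_tail_nonneg {ω : Ω} (hω : ω ∈ G X) (n : ℕ) : 0 ≤ ∑' j, X (j+n) ω :=
  tsum_nonneg (fun j => G_nonneg hω (j+n))

lemma G_tail_le {ω : Ω} (hω : ω ∈ G X) (n : ℕ) : (∑' j, X (j+n) ω) ≤ ((2:ℝ)^n)⁻¹ := by
  rw [← tsum_c_from n]
  exact Summable.tsum_le_tsum (fun j => G_le hω (j+n))
    ((summable_nat_add_iff n).2 (G_summable hω)) ((summable_nat_add_iff n).2 summable_c)

set_option maxHeartbeats 1000000 in
lemma G_tail_zero {ω : Ω} (hω : ω ∈ G X) (n : ℕ) (h : (∑' j, X (j+n) ω) = 0) :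
    ∀ j, X (j+n) ω = 0 := by
  intro j
  have hs : Summable (fun i => X (i+n) ω) := (summable_nat_add_iff n).2 (G_summable hω)
  have h1 : X (j+n) ω ≤ ∑' i, X (i+n) ω := by
    exact Summable.le_tsum hs j (fun i _ => G_nonneg hω (i+n))
  have h2 := G_nonneg hω (j+n)
  rw [h] at h1
  linarith

lemma cdf_dyadic (hmeas : ∀ j, Measurable (X j))
    (hindep : ProbabilityTheory.iIndepFun X μ)
    (hone' : ∀ j, μ {ω | X j ω = c j} = ENNReal.ofReal (p j))
    (hzero' : ∀ j, μ {ω | X j ω = 0} = ENNReal.ofReal (q j))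
    (n k : ℕ) (hk : k ≤ 2^n) :
    μ (G X ∩ {ω | (∑' j, X j ω) ≤ (k:ℝ)/2^n})
      = ENNReal.ofReal ((1 - Real.exp (-((k:ℝ)/2^n))) / (1 - Real.exp (-1))) := by
  apply le_antisymm
  · have hsub : G X ∩ {ω | (∑' j, X j ω) ≤ (k:ℝ)/2^n}
        ⊆ (D X n ∩ {ω | S X n ω < (k:ℝ)/2^n}) ∪ (⋂ j, {ω | X (j+n) ω = 0}) := by
      rintro ω ⟨hG, hle⟩
      simp only [mem_setOf_eq] at hle
      have hD : ω ∈ D X n := fun j _ => hG j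
      by_cases hS : S X n ω < (k:ℝ)/2^n
      · exact Or.inl ⟨hD, hS⟩
      · right
        push_neg at hS
        have hsplit := G_split hG n
        have htnn := G_tail_nonneg hG n
        have htz : (∑' j, X (j+n) ω) = 0 := by
          have : (∑' j, X j ω) ≥ (k:ℝ)/2^n + (∑' j, X (j+n) ω) := by
            rw [hsplit]; linarith
          linarith
        simp only [mem_iInter, mem_setOf_eq]
        exact G_tail_zero hG n htz
    calc μ (G X ∩ {ω | (∑' j, X j ω) ≤ (k:ℝ)/2^n})
        ≤ μ ((D X n ∩ {ω | S X n ω < (k:ℝ)/2^n}) ∪ (⋂ j, {ω | X (j+n) ω = 0})) :=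
          measure_mono hsub
      _ ≤ μ (D X n ∩ {ω | S X n ω < (k:ℝ)/2^n}) + μ (⋂ j, {ω | X (j+n) ω = 0}) :=
          measure_union_le _ _
      _ = ENNReal.ofReal ((1 - Real.exp (-((k:ℝ)/2^n))) / (1 - Real.exp (-1))) := by
          rw [tail_null μ hindep hzero' n, add_zero, dyadic_cdf μ hmeas hindep hone' hzero' n k hk]
  · rw [← dyadic_cdf μ hmeas hindep hone' hzero' n k hk]
    have hsub2 : (D X n ∩ {ω | S X n ω < (k:ℝ)/2^n})
        ⊆ (G X ∩ {ω | (∑' j, X j ω) ≤ (k:ℝ)/2^n}) ∪ (G X)ᶜ := by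
      rintro ω ⟨hD, hS⟩
      by_cases hG : ω ∈ G X
      · left
        refine ⟨hG, ?_⟩
        simp only [mem_setOf_eq] at hS ⊢
        obtain ⟨m, hm⟩ := dyadic_value n ω hD
        have hmk : m < k := (cast_div_lt m k n).1 (hm ▸ hS)
        have h1 : (∑' j, X j ω) ≤ S X n ω + ((2:ℝ)^n)⁻¹ := by
          rw [G_split hG n]
          linarith [G_tail_le hG n]
        have h2 : S X n ω + ((2:ℝ)^n)⁻¹ = ((m+1:ℕ):ℝ)/2^n := by
          rw [hm]; push_cast; field_simp
        rw [h2] at h1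
        exact h1.trans (cast_div_le n (by omega))
      · exact Or.inr hG
    calc μ (D X n ∩ {ω | S X n ω < (k:ℝ)/2^n})
        ≤ μ ((G X ∩ {ω | (∑' j, X j ω) ≤ (k:ℝ)/2^n}) ∪ (G X)ᶜ) := measure_mono hsub2
      _ ≤ μ (G X ∩ {ω | (∑' j, X j ω) ≤ (k:ℝ)/2^n}) + μ (G X)ᶜ := measure_union_le _ _
      _ = μ (G X ∩ {ω | (∑' j, X j ω) ≤ (k:ℝ)/2^n}) := by
          rw [G_compl_null μ hmeas hone' hzero', add_zero]

noncomputable def Z (X : ℕ → Ω → ℝ) : Ω → ℝ := fun ω => (∑' j, ENNReal.ofReal (X j ω)).toReal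

lemma meas_Z (hmeas : ∀ j, Measurable (X j)) : Measurable (Z X) := by
  apply Measurable.ennreal_toReal
  exact Measurable.ennreal_tsum (fun j => ENNReal.measurable_ofReal.comp (hmeas j))

lemma Z_eq {ω : Ω} (hω : ω ∈ G X) : Z X ω = ∑' j, X j ω := by
  have h := ENNReal.ofReal_tsum_of_nonneg (G_nonneg hω) (G_summable hω)
  rw [Z, ← h, ENNReal.toReal_ofReal (tsum_nonneg (G_nonneg hω))]

lemma measure_eq_of_diff_null {A B N : Set Ω} (hN : μ N = 0)
    (h : ∀ ω, ω ∉ N → (ω ∈ A ↔ ω ∈ B)) : μ A = μ B := by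
  have key : ∀ A' B' : Set Ω, (∀ ω, ω ∉ N → (ω ∈ A' ↔ ω ∈ B')) → μ A' ≤ μ B' := by
    intro A' B' hAB
    have hsub : A' ⊆ B' ∪ N := by
      intro ω hω
      by_cases h' : ω ∈ N
      · exact Or.inr h'
      · exact Or.inl ((hAB ω h').1 hω)
    calc μ A' ≤ μ (B' ∪ N) := measure_mono hsub
    _ ≤ μ B' + μ N := measure_union_le _ _
    _ = μ B' := by rw [hN, add_zero]
  exact le_antisymm (key A B h) (key B A (fun ω hω => (h ω hω).symm))

lemma G_tsum_nonneg {ω : Ω} (hω : ω ∈ G X) : 0 ≤ ∑' j, X j ω :=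
  tsum_nonneg (G_nonneg hω)

lemma G_tsum_le_one {ω : Ω} (hω : ω ∈ G X) : (∑' j, X j ω) ≤ 1 := by
  have h := G_split hω 0
  have h2 := G_tail_le hω 0
  have h3 : S X 0 ω = 0 := by simp [S]
  rw [h, h3]
  simpa using h2

lemma mu_G_one (hmeas : ∀ j, Measurable (X j))
    (hone' : ∀ j, μ {ω | X j ω = c j} = ENNReal.ofReal (p j))
    (hzero' : ∀ j, μ {ω | X j ω = 0} = ENNReal.ofReal (q j)) :
    μ (G X) = 1 := by
  have h := G_compl_null μ hmeas hone' hzero'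
  have h2 : (1:ℝ≥0∞) = μ univ := (measure_univ).symm
  apply le_antisymm prob_le_one
  calc (1:ℝ≥0∞) = μ univ := h2
  _ = μ (G X ∪ (G X)ᶜ) := by rw [union_compl_self]
  _ ≤ μ (G X) + μ (G X)ᶜ := measure_union_le _ _
  _ = μ (G X) := by rw [h, add_zero]

lemma Z_pre (hmeas : ∀ j, Measurable (X j))
    (hone' : ∀ j, μ {ω | X j ω = c j} = ENNReal.ofReal (p j))
    (hzero' : ∀ j, μ {ω | X j ω = 0} = ENNReal.ofReal (q j)) (s : Set ℝ) :
    μ (Z X ⁻¹' s) = μ (G X ∩ {ω | (∑' j, X j ω) ∈ s}) := by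
  apply measure_eq_of_diff_null μ (G_compl_null μ hmeas hone' hzero')
  intro ω hω
  rw [notMem_compl_iff] at hω
  simp only [mem_preimage, mem_inter_iff, mem_setOf_eq, Z_eq hω]
  exact ⟨fun h => ⟨hω, h⟩, fun h => h.2⟩

lemma map_eq_rho (hmeas : ∀ j, Measurable (X j))
    (hindep : ProbabilityTheory.iIndepFun X μ)
    (hone' : ∀ j, μ {ω | X j ω = c j} = ENNReal.ofReal (p j))
    (hzero' : ∀ j, μ {ω | X j ω = 0} = ENNReal.ofReal (q j)) :
    Measure.map (Z X) μ = rho := by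
  have hZ := meas_Z (X := X) hmeas
  haveI : IsProbabilityMeasure (Measure.map (Z X) μ) :=
    Measure.isProbabilityMeasure_map hZ.aemeasurable
  refine MeasureTheory.Measure.ext_of_Iic (Measure.map (Z X) μ) rho (fun x => ?_)
  have hpre : ∀ t : ℝ, Measure.map (Z X) μ (Iic t)
      = μ (G X ∩ {ω | (∑' j, X j ω) ≤ t}) := by
    intro t
    rw [Measure.map_apply hZ measurableSet_Iic, Z_pre μ hmeas hone' hzero']
    rfl
  rcases lt_or_ge x 0 with hx0 | hx0
  · rw [hpre]
    have he : G X ∩ {ω : Ω | (∑' j, X j ω) ≤ x} = ∅ := by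
      ext ω
      simp only [mem_inter_iff, mem_setOf_eq, mem_empty_iff_false, iff_false, not_and]
      intro hG hle
      linarith [G_tsum_nonneg hG]
    have he2 : Iic x ∩ Icc (0:ℝ) 1 = ∅ := by
      apply eq_empty_iff_forall_notMem.2
      intro y hy
      simp only [mem_inter_iff, mem_Iic, mem_Icc] at hy
      linarith [hy.1, hy.2.1]
    rw [he, rho_apply measurableSet_Iic, he2]
    simp
  rcases le_or_gt x 1 with hx1 | hx1
  · -- dyadic approximation
    set seq : ℕ → ℝ := fun m => ((⌈x * 2^m⌉₊ : ℕ):ℝ)/2^m with hseqdef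
    have hxle : ∀ m, x ≤ seq m := by
      intro m
      rw [hseqdef]
      rw [le_div_iff₀ (by positivity)]
      exact Nat.le_ceil _
    have hslt : ∀ m, seq m < x + ((2:ℝ)^m)⁻¹ := by
      intro m
      rw [hseqdef, div_lt_iff₀ (by positivity)]
      calc ((⌈x*2^m⌉₊:ℕ):ℝ) < x*2^m + 1 := Nat.ceil_lt_add_one (by positivity)
      _ = (x + ((2:ℝ)^m)⁻¹)*2^m := by field_simp
    have hanti : Antitone (fun m => Iic (seq m)) := by
      apply antitone_nat_of_succ_le
      intro m
      apply Iic_subset_Iic.2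
      have hknat : ⌈x * 2^(m+1)⌉₊ ≤ 2 * ⌈x * 2^m⌉₊ := by
        apply Nat.ceil_le.2
        push_cast
        calc x * 2^(m+1) = 2*(x*2^m) := by ring
        _ ≤ 2*((⌈x*2^m⌉₊:ℕ):ℝ) := by linarith [Nat.le_ceil (x*2^m)]
      calc seq (m+1) ≤ ((2*⌈x*2^m⌉₊ : ℕ):ℝ)/2^(m+1) := cast_div_le (m+1) hknat
      _ = seq m := two_m _ m
    have hiInt : (⋂ m, Iic (seq m)) = Iic x := by
      apply Subset.antisymm
      · intro y hy
        simp only [mem_iInter, mem_Iic] at hy ⊢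
        by_contra hxy
        push_neg at hxy
        obtain ⟨m, hm⟩ := exists_pow_lt_of_lt_one (show (0:ℝ) < y - x by linarith)
          (show (2⁻¹:ℝ) < 1 by norm_num)
        have h2 : ((2:ℝ)^m)⁻¹ < y - x := by rw [← inv_pow]; exact hm
        linarith [hslt m, hy m]
      · intro y hy
        simp only [mem_iInter, mem_Iic] at hy ⊢
        exact fun m => le_trans hy (hxle m)
    have hagree : ∀ m, Measure.map (Z X) μ (Iic (seq m)) = rho (Iic (seq m)) := by
      intro m
      have hk2m : ⌈x*2^m⌉₊ ≤ 2^m := by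
        apply Nat.ceil_le.2
        calc x * 2^m ≤ 1 * 2^m := by
              have : (0:ℝ) < 2^m := by positivity
              nlinarith
        _ = ((2^m : ℕ):ℝ) := by push_cast; ring
      have hs0 : 0 ≤ seq m := by rw [hseqdef]; positivity
      have hs1 : seq m ≤ 1 := by
        rw [hseqdef]
        calc ((⌈x*2^m⌉₊:ℕ):ℝ)/2^m ≤ ((2^m:ℕ):ℝ)/2^m := cast_div_le m hk2m
        _ = 1 := by rw [div_eq_one_iff_eq (by positivity)]; push_cast; ring
      rw [hpre, rho_Iic hs0 hs1, hseqdef]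
      exact cdf_dyadic μ hmeas hindep hone' hzero' m _ hk2m
    have hνlim : Tendsto (fun m => Measure.map (Z X) μ (Iic (seq m))) atTop
        (𝓝 (Measure.map (Z X) μ (Iic x))) := by
      have h := tendsto_measure_iInter_atTop (μ := Measure.map (Z X) μ)
        (fun m => measurableSet_Iic.nullMeasurableSet) hanti ⟨0, measure_ne_top _ _⟩
      rwa [hiInt] at h
    have hρlim : Tendsto (fun m => rho (Iic (seq m))) atTop (𝓝 (rho (Iic x))) := by
      have hfin : rho (Iic (seq 0)) ≠ ⊤ := by
        rw [rho_Iic (by positivity) ?hle]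
        · exact ENNReal.ofReal_ne_top
        case hle =>
          have hk20 : ⌈x*2^0⌉₊ ≤ 2^0 := by
            apply Nat.ceil_le.2
            simpa using hx1
          calc ((⌈x*2^0⌉₊:ℕ):ℝ)/2^0 ≤ ((2^0:ℕ):ℝ)/2^0 := cast_div_le 0 hk20
          _ = 1 := by norm_num
      have h := tendsto_measure_iInter_atTop (μ := rho)
        (fun m => measurableSet_Iic.nullMeasurableSet) hanti ⟨0, hfin⟩
      rwa [hiInt] at h
    exact tendsto_nhds_unique (hνlim.congr hagree) hρlim
  · -- x > 1
    rw [hpre]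
    have he : G X ∩ {ω : Ω | (∑' j, X j ω) ≤ x} = G X := by
      apply inter_eq_self_of_subset_left
      intro ω hω
      simp only [mem_setOf_eq]
      linarith [G_tsum_le_one hω]
    rw [he, mu_G_one μ hmeas hone' hzero']
    have he2 : Iic x ∩ Icc (0:ℝ) 1 = Iic 1 ∩ Icc (0:ℝ) 1 := by
      ext y
      simp only [mem_inter_iff, mem_Iic, mem_Icc]
      constructor
      · rintro ⟨h1, h2, h3⟩; exact ⟨h3, h2, h3⟩
      · rintro ⟨h1, h2, h3⟩; exact ⟨by linarith, h2, h3⟩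
    have : rho (Iic x) = rho (Iic 1) := by
      rw [rho_apply measurableSet_Iic, rho_apply measurableSet_Iic, he2]
    rw [this, rho_Iic (by norm_num) (le_refl 1), div_self (ne_of_gt one_sub_E_pos)]
    simp

end Main
end BCTE

open MeasureTheory

/-- let `p_j = e^{−2^{−j}}/(1 + e^{−2^{−j}})` for `j ≥ 1` (here the index
`j : ℕ` stands for `j+1`), and let `(X_j)` be independent with
`P(X_j = 2^{−j}) = p_j`, `P(X_j = 0) = 1 − p_j`.  Then `X = Σ_j X_j` is absolutely
continuous with density `e^{−x}/(1 − e^{−1})` on `[0,1]` (and `0` elsewhere), i.e. it is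
a truncated exponential random variable on `[0,1]`. -/
theorem bernoulli_convolution_truncated_exponential
    {Ω : Type} [MeasurableSpace Ω] (μ : Measure Ω) [IsProbabilityMeasure μ]
    (X : ℕ → Ω → ℝ) (hmeas : ∀ j, Measurable (X j))
    (hindep : ProbabilityTheory.iIndepFun X μ)
    (hone : ∀ j : ℕ,
      μ {ω | X j ω = ((2 : ℝ) ^ (j + 1))⁻¹}
        = ENNReal.ofReal (Real.exp (-((2 : ℝ) ^ (j + 1))⁻¹)
            / (1 + Real.exp (-((2 : ℝ) ^ (j + 1))⁻¹))))
    (hzero : ∀ j : ℕ,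
      μ {ω | X j ω = 0}
        = ENNReal.ofReal (1 - Real.exp (-((2 : ℝ) ^ (j + 1))⁻¹)
            / (1 + Real.exp (-((2 : ℝ) ^ (j + 1))⁻¹)))) :
    ∀ s : Set ℝ, MeasurableSet s →
      μ {ω | (∑' j : ℕ, X j ω) ∈ s}
        = ∫⁻ x in s ∩ Set.Icc (0 : ℝ) 1,
            ENNReal.ofReal (Real.exp (-x) / (1 - Real.exp (-1))) := by
  intro s hs
  have hone' : ∀ j, μ {ω | X j ω = BCTE.c j} = ENNReal.ofReal (BCTE.p j) := by
    intro j
    rw [show BCTE.c j = ((2:ℝ)^(j+1))⁻¹ from rfl,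
      show BCTE.p j = Real.exp (-((2:ℝ)^(j+1))⁻¹) / (1 + Real.exp (-((2:ℝ)^(j+1))⁻¹)) from rfl]
    exact hone j
  have hzero' : ∀ j, μ {ω | X j ω = 0} = ENNReal.ofReal (BCTE.q j) := by
    intro j
    rw [show BCTE.q j = 1 - Real.exp (-((2:ℝ)^(j+1))⁻¹)
        / (1 + Real.exp (-((2:ℝ)^(j+1))⁻¹)) from rfl]
    exact hzero j
  calc μ {ω | (∑' j : ℕ, X j ω) ∈ s}
      = μ (BCTE.G X ∩ {ω | (∑' j : ℕ, X j ω) ∈ s}) := by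
        apply BCTE.measure_eq_of_diff_null μ (BCTE.G_compl_null μ hmeas hone' hzero')
        intro ω hω
        rw [Set.notMem_compl_iff] at hω
        simp only [Set.mem_inter_iff, Set.mem_setOf_eq]
        exact ⟨fun h => ⟨hω, h⟩, fun h => h.2⟩
    _ = μ (BCTE.Z X ⁻¹' s) := (BCTE.Z_pre μ hmeas hone' hzero' s).symm
    _ = Measure.map (BCTE.Z X) μ s := (Measure.map_apply (BCTE.meas_Z hmeas) hs).symm
    _ = BCTE.rho s := by rw [BCTE.map_eq_rho μ hmeas hindep hone' hzero']
    _ = ∫⁻ x in s ∩ Set.Icc (0 : ℝ) 1,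
          ENNReal.ofReal (Real.exp (-x) / (1 - Real.exp (-1))) := BCTE.rho_apply hs
end

section
/- Let z ∈ ℂ with Re z ≠ 0. Then for every n ≥ 1, ∏_{j=1}^n (e^{z/2^j} + 1) = (e^z − 1)/(e^{z/2^n} − 1), and consequently lim_{n→∞} ∏_{j=1}^n (e^{z/2^j} + 1)/(e^{−1/2^j} + 1) = (e^z − 1) / ( z·(1 − e^{−1}) ). In particular, with z = −1 + it for t ∈ ℝ, the limit equals the Fourier transform ∫_0^1 e^{itx}·e^{−x}/(1 − e^{−1}) dx of the truncated exponential density. -/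
open Complex Filter Topology

lemma exp_sub_one_ne' (w : ℂ) (hw : w.re ≠ 0) : Complex.exp w - 1 ≠ 0 := by
  intro h
  have h1 : Complex.exp w = 1 := by linear_combination h
  have h2 : ‖Complex.exp w‖ = ‖(1:ℂ)‖ := congrArg norm h1
  rw [Complex.norm_exp, norm_one, Real.exp_eq_one_iff] at h2
  exact hw h2

lemma re_div_pow_ne (z : ℂ) (hz : z.re ≠ 0) (j : ℕ) : (z / 2 ^ j).re ≠ 0 := by
  have h2 : ((2:ℂ))^j = ((2^j : ℝ) : ℂ) := by push_cast; ring
  rw [h2, Complex.div_ofReal_re]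
  have : (0:ℝ) < 2 ^ j := by positivity
  exact div_ne_zero hz (ne_of_gt this)

lemma sq_aux (w : ℂ) : (Complex.exp (w/2) - 1) * (Complex.exp (w/2) + 1) = Complex.exp w - 1 := by
  have h : Complex.exp (w/2) * Complex.exp (w/2) = Complex.exp w := by
    rw [← Complex.exp_add]; ring_nf
  linear_combination h

lemma prod_aux (z : ℂ) (hz : z.re ≠ 0) : ∀ n : ℕ, 1 ≤ n →
    (∏ j ∈ Finset.Icc 1 n, (Complex.exp (z / 2 ^ j) + 1))
      = (Complex.exp z - 1) / (Complex.exp (z / 2 ^ n) - 1) := by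
  have hne : ∀ j : ℕ, Complex.exp (z / 2 ^ j) - 1 ≠ 0 :=
    fun j => exp_sub_one_ne' _ (re_div_pow_ne z hz j)
  intro n hn
  induction n with
  | zero => omega
  | succ m ih =>
    rcases Nat.lt_or_ge m 1 with hm | hm
    · interval_cases m
      rw [Finset.Icc_self, Finset.prod_singleton, eq_div_iff (hne 1)]
      have := sq_aux z
      norm_num at this ⊢
      linear_combination this
    · rw [Finset.prod_Icc_succ_top (by omega), ih hm, div_mul_eq_mul_div,
        div_eq_div_iff (hne m) (hne (m+1))]
      have key : (Complex.exp (z / 2 ^ (m+1)) - 1) * (Complex.exp (z / 2 ^ (m+1)) + 1)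
          = Complex.exp (z / 2 ^ m) - 1 := by
        have h := sq_aux (z / 2 ^ m)
        have h2 : z / 2 ^ m / 2 = z / 2 ^ (m+1) := by ring
        rwa [h2] at h
      linear_combination (Complex.exp z - 1) * key

/-- for `z ∈ ℂ` with `Re z ≠ 0`, the telescoping product identity
`∏_{j=1}^n (e^{z/2^j} + 1) = (e^z − 1)/(e^{z/2^n} − 1)` holds for all `n ≥ 1`;
consequently `∏_{j=1}^n (e^{z/2^j} + 1)/(e^{−1/2^j} + 1) → (e^z − 1)/(z·(1 − e^{−1}))`,
and with `z = −1 + it` the limit is the Fourier transform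
`∫_0^1 e^{itx} e^{−x}/(1 − e^{−1}) dx` of the truncated exponential density. -/
theorem truncated_exponential_product_identity
    (z : ℂ) (hz : z.re ≠ 0) :
    (∀ n : ℕ, 1 ≤ n →
        (∏ j ∈ Finset.Icc 1 n, (Complex.exp (z / 2 ^ j) + 1))
          = (Complex.exp z - 1) / (Complex.exp (z / 2 ^ n) - 1)) ∧
    Filter.Tendsto
        (fun n : ℕ =>
          ∏ j ∈ Finset.Icc 1 n,
            (Complex.exp (z / 2 ^ j) + 1) / (Complex.exp (-1 / 2 ^ j) + 1))
        Filter.atTop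
        (nhds ((Complex.exp z - 1) / (z * (1 - Complex.exp (-1))))) ∧
    (∀ t : ℝ, z = -1 + Complex.I * t →
        (Complex.exp z - 1) / (z * (1 - Complex.exp (-1)))
          = ∫ x in (0 : ℝ)..1,
              Complex.exp (Complex.I * t * x) * Complex.exp (-x) / (1 - Complex.exp (-1))) := by
  have hz0 : z ≠ 0 := fun h => hz (by simp [h])
  have hm1 : ((-1 : ℂ)).re ≠ 0 := by norm_num
  have hnez : ∀ j : ℕ, Complex.exp (z / 2 ^ j) - 1 ≠ 0 :=
    fun j => exp_sub_one_ne' _ (re_div_pow_ne z hz j)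
  have hne1 : ∀ j : ℕ, Complex.exp ((-1 : ℂ) / 2 ^ j) - 1 ≠ 0 :=
    fun j => exp_sub_one_ne' _ (re_div_pow_ne (-1) hm1 j)
  refine ⟨prod_aux z hz, ?_, ?_⟩
  · -- limit
    have hslope : Tendsto (fun w : ℂ => (Complex.exp w - 1) / w) (𝓝[≠] 0) (𝓝 1) := by
      have h := (Complex.hasDerivAt_exp 0)
      rw [hasDerivAt_iff_tendsto_slope] at h
      simp only [Complex.exp_zero] at h
      refine h.congr' ?_
      filter_upwards [self_mem_nhdsWithin] with w hw
      simp [slope, Complex.exp_zero, div_eq_inv_mul]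
    have hpow : Tendsto (fun n : ℕ => (1:ℂ) / 2 ^ n) atTop (𝓝 0) := by
      simpa using tendsto_pow_atTop_nhds_zero_of_norm_lt_one
        (show ‖(1/2 : ℂ)‖ < 1 by norm_num) |>.congr (fun n => by rw [div_pow, one_pow, one_div])
    have htozero : ∀ c : ℂ, c ≠ 0 →
        Tendsto (fun n : ℕ => c / 2 ^ n) atTop (𝓝[≠] 0) := by
      intro c hc
      apply tendsto_nhdsWithin_of_tendsto_nhds_of_eventually_within
      · have := hpow.const_mul c
        simpa [mul_one_div, div_eq_mul_inv] using this
      · filter_upwards with n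
        exact div_ne_zero hc (pow_ne_zero _ two_ne_zero)
    have hA : Tendsto (fun n : ℕ => (Complex.exp (z / 2 ^ n) - 1) / (z / 2 ^ n)) atTop (𝓝 1) :=
      hslope.comp (htozero z hz0)
    have hB : Tendsto (fun n : ℕ => (Complex.exp ((-1:ℂ) / 2 ^ n) - 1) / ((-1:ℂ) / 2 ^ n)) atTop (𝓝 1) :=
      hslope.comp (htozero (-1) (by norm_num))
    have hC : Tendsto (fun n : ℕ =>
        ((Complex.exp z - 1) / (z * (1 - Complex.exp (-1)))) *
          ((Complex.exp ((-1:ℂ) / 2 ^ n) - 1) / ((-1:ℂ) / 2 ^ n) /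
            ((Complex.exp (z / 2 ^ n) - 1) / (z / 2 ^ n)))) atTop
        (𝓝 ((Complex.exp z - 1) / (z * (1 - Complex.exp (-1))))) := by
      have := (hB.div hA one_ne_zero).const_mul
        ((Complex.exp z - 1) / (z * (1 - Complex.exp (-1))))
      simpa using this
    refine hC.congr' ?_
    filter_upwards [Filter.eventually_ge_atTop 1] with n hn
    rw [Finset.prod_div_distrib, prod_aux z hz n hn, prod_aux (-1) hm1 n hn]
    have he1 : Complex.exp (-1 : ℂ) - 1 ≠ 0 := exp_sub_one_ne' _ hm1
    have h1e : (1 : ℂ) - Complex.exp (-1) ≠ 0 := by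
      intro h; apply he1; linear_combination -h
    have hp : (2:ℂ) ^ n ≠ 0 := pow_ne_zero _ two_ne_zero
    have ha := hnez n
    have hb := hne1 n
    set a := Complex.exp (z / 2 ^ n) with hadef
    set b := Complex.exp ((-1:ℂ) / 2 ^ n) with hbdef
    field_simp
    ring
  · -- integral
    intro t ht
    have hint := integral_exp_mul_complex (a := (0:ℝ)) (b := 1) (c := z) hz0
    have heq : ∀ x : ℝ, Complex.exp (Complex.I * t * x) * Complex.exp (-x)
        = Complex.exp (z * x) := by
      intro x
      rw [← Complex.exp_add, ht]
      push_cast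
      ring_nf
    have h1e : (1 : ℂ) - Complex.exp (-1) ≠ 0 := by
      intro h
      have := exp_sub_one_ne' (-1 : ℂ) hm1
      apply this; linear_combination -h
    simp only [heq]
    rw [intervalIntegral.integral_div, hint]
    simp only [Complex.ofReal_one, Complex.ofReal_zero, mul_one, mul_zero, Complex.exp_zero]
    field_simp
end
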